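/- Let ε > 0 and λ > 0 with √λ > ε, and let z* be the unique root in the interval (2√λ − ε, λ/ε) of the function r(z) = q_{λ,z}(r₂(z)) − q_{λ,z}(0). Then for every z ∈ ℝ: prox_{λg}(z) = {0} if |z| < z*; prox_{λg}(z) = {0, sgn(z)·r₂(z*)} if |z| = z*; and prox_{λg}(z) = {sgn(z)·r₂(|z|)} if |z| > z*. -/

import Mathlib

open Real Filter

/-- The scalar log-sum penalty `g(w) = log(1 + |w|/ε)`. -/
noncomputable def logpen (ε : ℝ) (w : ℝ) : ℝ := Real.log (1 + |w| / ε)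

/-- The objective `q_{λ,z}(x) = (1/(2λ))(x − z)² + g(x)`. -/
noncomputable def qfun (lam ε z x : ℝ) : ℝ :=
  1 / (2 * lam) * (x - z) ^ 2 + logpen ε x

/-- The proximity operator of `λ g` at `z`: the set of global minimizers of `q_{λ,z}`. -/
def prox (lam ε z : ℝ) : Set ℝ := {x | ∀ y : ℝ, qfun lam ε z x ≤ qfun lam ε z y}

/-- `r₁(z) = (z − ε)/2 − √((z + ε)²/4 − λ)`. -/
noncomputable def r1 (lam ε z : ℝ) : ℝ :=
  (z - ε) / 2 - Real.sqrt ((z + ε) ^ 2 / 4 - lam)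

/-- `r₂(z) = (z − ε)/2 + √((z + ε)²/4 − λ)`. -/
noncomputable def r2 (lam ε z : ℝ) : ℝ :=
  (z - ε) / 2 + Real.sqrt ((z + ε) ^ 2 / 4 - lam)

/-- `r(z) = q_{λ,z}(r₂(z)) − q_{λ,z}(0)`. -/
noncomputable def rfun (lam ε z : ℝ) : ℝ :=
  qfun lam ε z (r2 lam ε z) - qfun lam ε z 0

/-- The iteratively reweighted ℓ₁ iteration for `prox_{λ g}(z)`. -/
def IterRW (lam ε z : ℝ) (x : ℕ → ℝ) : Prop :=
  ∀ k : ℕ, x (k + 1) =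
    if |z| ≤ lam / (ε + |x k|) then 0
    else Real.sign z * (|z| - lam / (ε + |x k|))

section aux
open Set
lemma qfun_cont (lam ε z : ℝ) (hε : 0 < ε) : Continuous (qfun lam ε z) := by
  unfold qfun logpen
  apply Continuous.add
  · continuity
  · apply Continuous.log
    · continuity
    · intro x
      positivity

lemma qfun_hasDeriv (lam ε z : ℝ) (hε : 0 < ε) {x : ℝ} (hx : 0 < x) :
    HasDerivAt (qfun lam ε z) ((x - z) / lam + 1 / (ε + x)) x := by
  have hev : (fun y => 1 / (2 * lam) * (y - z) ^ 2 + Real.log (1 + y / ε)) =ᶠ[nhds x] qfun lam ε z := by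
    filter_upwards [eventually_gt_nhds hx] with y hy
    simp [qfun, logpen, abs_of_pos hy]
  apply HasDerivAt.congr_of_eventuallyEq _ hev.symm
  have h1 : HasDerivAt (fun y : ℝ => 1 / (2 * lam) * (y - z) ^ 2) ((x - z) / lam) x := by
    have : HasDerivAt (fun y : ℝ => 1 / (2 * lam) * (y - z) ^ 2) (1 / (2 * lam) * (↑2 * (id x - z) ^ (2 - 1) * 1)) x := (((hasDerivAt_id x).sub_const z).pow 2).const_mul (1 / (2 * lam))
    convert this using 1
    simp only [id]
    ring
  have h2 : HasDerivAt (fun y : ℝ => Real.log (1 + y / ε)) (1 / (ε + x)) x := by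
    have hb : HasDerivAt (fun y : ℝ => 1 + y / ε) (1 / ε) x := by
      simpa using ((hasDerivAt_id x).div_const ε).const_add 1
    have hne : 1 + x / ε ≠ 0 := by positivity
    have := hb.log hne
    convert this using 1
    field_simp
  exact h1.add h2

lemma qderiv_pos (lam ε z : ℝ) (hε : 0 < ε) (hlam : 0 < lam) {x : ℝ} (hx : 0 < x)
    (hp : 0 < (x - z) * (ε + x) + lam) : 0 < (x - z) / lam + 1 / (ε + x) := by
  have hεx : 0 < ε + x := by linarith
  have : (x - z) / lam + 1 / (ε + x) = ((x - z) * (ε + x) + lam) / (lam * (ε + x)) := by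
    field_simp
  rw [this]
  positivity

lemma qderiv_neg (lam ε z : ℝ) (hε : 0 < ε) (hlam : 0 < lam) {x : ℝ} (hx : 0 < x)
    (hp : (x - z) * (ε + x) + lam < 0) : (x - z) / lam + 1 / (ε + x) < 0 := by
  have hεx : 0 < ε + x := by linarith
  have : (x - z) / lam + 1 / (ε + x) = ((x - z) * (ε + x) + lam) / (lam * (ε + x)) := by
    field_simp
  rw [this]
  exact div_neg_of_neg_of_pos hp (by positivity)

lemma qMono_Icc (lam ε z : ℝ) (hε : 0 < ε) (hlam : 0 < lam) {a b : ℝ} (ha : 0 ≤ a)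
    (hp : ∀ x ∈ Ioo a b, 0 < (x - z) * (ε + x) + lam) :
    StrictMonoOn (qfun lam ε z) (Icc a b) := by
  apply strictMonoOn_of_deriv_pos (convex_Icc a b) ((qfun_cont lam ε z hε).continuousOn)
  intro x hx
  rw [interior_Icc] at hx
  have hx0 : 0 < x := lt_of_le_of_lt ha hx.1
  rw [(qfun_hasDeriv lam ε z hε hx0).deriv]
  exact qderiv_pos lam ε z hε hlam hx0 (hp x hx)

lemma qMono_Ici (lam ε z : ℝ) (hε : 0 < ε) (hlam : 0 < lam) {a : ℝ} (ha : 0 ≤ a)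
    (hp : ∀ x ∈ Ioi a, 0 < (x - z) * (ε + x) + lam) :
    StrictMonoOn (qfun lam ε z) (Ici a) := by
  apply strictMonoOn_of_deriv_pos (convex_Ici a) ((qfun_cont lam ε z hε).continuousOn)
  intro x hx
  rw [interior_Ici] at hx
  have hx0 : 0 < x := lt_of_le_of_lt ha hx
  rw [(qfun_hasDeriv lam ε z hε hx0).deriv]
  exact qderiv_pos lam ε z hε hlam hx0 (hp x hx)

lemma qAnti_Icc (lam ε z : ℝ) (hε : 0 < ε) (hlam : 0 < lam) {a b : ℝ} (ha : 0 ≤ a)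
    (hp : ∀ x ∈ Ioo a b, (x - z) * (ε + x) + lam < 0) :
    StrictAntiOn (qfun lam ε z) (Icc a b) := by
  apply strictAntiOn_of_deriv_neg (convex_Icc a b) ((qfun_cont lam ε z hε).continuousOn)
  intro x hx
  rw [interior_Icc] at hx
  have hx0 : 0 < x := lt_of_le_of_lt ha hx.1
  rw [(qfun_hasDeriv lam ε z hε hx0).deriv]
  exact qderiv_neg lam ε z hε hlam hx0 (hp x hx)

section facts
variable {lam ε z : ℝ} (hε : 0 < ε) (hlam : 0 < lam) (h : ε < Real.sqrt lam)
  (hz : 2 * Real.sqrt lam - ε ≤ z)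

include hε hlam h hz

lemma hD : 0 ≤ (z + ε) ^ 2 / 4 - lam := by
  have hsl : Real.sqrt lam ^ 2 = lam := Real.sq_sqrt hlam.le
  nlinarith [Real.sqrt_pos.2 hlam]

lemma factor (x : ℝ) :
    (x - z) * (ε + x) + lam = (x - r1 lam ε z) * (x - r2 lam ε z) := by
  have hs := Real.sq_sqrt (hD hε hlam h hz)
  unfold r1 r2
  nlinarith [hs]

lemma r2_ge : Real.sqrt lam - ε ≤ r2 lam ε z := by
  have hs := Real.sqrt_nonneg ((z + ε) ^ 2 / 4 - lam)
  unfold r2; linarith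

lemma r2_pos : 0 < r2 lam ε z := lt_of_lt_of_le (by linarith) (r2_ge hε hlam h hz)

lemma r1_le : r1 lam ε z ≤ Real.sqrt lam - ε := by
  have hs := Real.sq_sqrt (hD hε hlam h hz)
  have hs0 := Real.sqrt_nonneg ((z + ε) ^ 2 / 4 - lam)
  have hsl : Real.sqrt lam ^ 2 = lam := Real.sq_sqrt hlam.le
  have hsl0 : 0 < Real.sqrt lam := Real.sqrt_pos.2 hlam
  unfold r1
  nlinarith [sq_nonneg (Real.sqrt ((z + ε) ^ 2 / 4 - lam) - ((z + ε)/2 - Real.sqrt lam)),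
    sq_nonneg (Real.sqrt ((z + ε) ^ 2 / 4 - lam) + ((z + ε)/2 - Real.sqrt lam))]

lemma r1_le_r2 : r1 lam ε z ≤ r2 lam ε z := by
  have hs := Real.sqrt_nonneg ((z + ε) ^ 2 / 4 - lam)
  unfold r1 r2; linarith

lemma r2_root : (r2 lam ε z - z) * (ε + r2 lam ε z) + lam = 0 := by
  rw [factor hε hlam h hz]
  simp

end facts

section keys
variable {lam ε z : ℝ} (hε : 0 < ε) (hlam : 0 < lam) (h : ε < Real.sqrt lam)

include hε hlam h

/-- On `[0, max r₁ 0]`, the value at `0` is the strict minimum. -/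
lemma key1 (hz : 2 * Real.sqrt lam - ε ≤ z) {y : ℝ} (hy0 : 0 ≤ y)
    (hy : y ≤ max (r1 lam ε z) 0) (hyne : y ≠ 0) : qfun lam ε z 0 < qfun lam ε z y := by
  have hfac := factor hε hlam h hz (z := z)
  have hmono : StrictMonoOn (qfun lam ε z) (Icc 0 (max (r1 lam ε z) 0)) := by
    apply qMono_Icc lam ε z hε hlam le_rfl
    intro x hx
    rw [hfac x]
    have hx1 : x < r1 lam ε z := by
      rcases le_or_gt (r1 lam ε z) 0 with h1 | h1
      · exfalso; rw [max_eq_right h1] at hx; exact absurd hx.2 (not_lt.2 hx.1.le)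
      · rw [max_eq_left h1.le] at hx; exact hx.2
    have hx2 : x < r2 lam ε z := lt_of_lt_of_le hx1 (r1_le_r2 hε hlam h hz)
    nlinarith
  have h0 : (0:ℝ) ∈ Icc 0 (max (r1 lam ε z) 0) := ⟨le_rfl, le_max_right _ _⟩
  exact hmono h0 ⟨hy0, hy⟩ (lt_of_le_of_ne hy0 (Ne.symm hyne))

/-- On `[max r₁ 0, ∞)`, the value at `r₂` is the strict minimum. -/
lemma key2 (hz : 2 * Real.sqrt lam - ε ≤ z) {y : ℝ} (hy : max (r1 lam ε z) 0 ≤ y) :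
    qfun lam ε z (r2 lam ε z) ≤ qfun lam ε z y ∧
      (y ≠ r2 lam ε z → qfun lam ε z (r2 lam ε z) < qfun lam ε z y) := by
  have hfac := factor hε hlam h hz (z := z)
  have hr2 : 0 < r2 lam ε z := r2_pos hε hlam h hz
  have hab : max (r1 lam ε z) 0 ≤ r2 lam ε z := max_le (r1_le_r2 hε hlam h hz) hr2.le
  have hanti : StrictAntiOn (qfun lam ε z) (Icc (max (r1 lam ε z) 0) (r2 lam ε z)) := by
    apply qAnti_Icc lam ε z hε hlam (le_max_right _ _)
    intro x hx
    rw [hfac x]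
    have hx1 : r1 lam ε z < x := lt_of_le_of_lt (le_max_left _ _) hx.1
    have hx2 : x < r2 lam ε z := hx.2
    nlinarith
  have hmono : StrictMonoOn (qfun lam ε z) (Ici (r2 lam ε z)) := by
    apply qMono_Ici lam ε z hε hlam hr2.le
    intro x hx
    rw [hfac x]
    have hx1 : r1 lam ε z < x := lt_of_le_of_lt (r1_le_r2 hε hlam h hz) hx
    nlinarith [mem_Ioi.1 hx]
  rcases le_or_gt y (r2 lam ε z) with hyb | hyb
  · constructor
    · rcases eq_or_lt_of_le hyb with rfl | hyb'
      · exact le_rfl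
      · exact (hanti ⟨hy, hyb⟩ ⟨hab, le_rfl⟩ hyb').le
    · intro hne
      exact hanti ⟨hy, hyb⟩ ⟨hab, le_rfl⟩ (lt_of_le_of_ne hyb hne)
  · have := hmono (mem_Ici.2 le_rfl) (mem_Ici.2 hyb.le) hyb
    exact ⟨this.le, fun _ => this⟩

omit h in
/-- For `z > 0` and `y < 0`, reflecting `y` strictly decreases the objective. -/
lemma key_neg (hz : 0 < z) {y : ℝ} (hy : y < 0) : qfun lam ε z (-y) < qfun lam ε z y := by
  have : qfun lam ε z y - qfun lam ε z (-y) = -2 * y * z / lam := by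
    unfold qfun logpen
    rw [abs_neg]
    field_simp
    ring
  have hpos : 0 < -2 * y * z / lam := div_pos (by nlinarith) hlam
  linarith

omit h in
/-- For `0 ≤ z < 2√λ − ε`, the objective is strictly minimized at `0`. -/
lemma key_small (hz0 : 0 ≤ z) (hz : z < 2 * Real.sqrt lam - ε) {y : ℝ} (hyne : y ≠ 0) :
    qfun lam ε z 0 < qfun lam ε z y := by
  have hsl : Real.sqrt lam ^ 2 = lam := Real.sq_sqrt hlam.le
  have hsl0 : 0 ≤ Real.sqrt lam := Real.sqrt_nonneg lam
  have hmono : StrictMonoOn (qfun lam ε z) (Ici (0:ℝ)) := by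
    apply qMono_Ici lam ε z hε hlam le_rfl
    intro x hx
    have hx0 : 0 < x := mem_Ioi.1 hx
    nlinarith [sq_nonneg (x - (z - ε)/2)]
  rcases lt_or_gt_of_ne hyne with hy | hy
  · rcases eq_or_lt_of_le hz0 with rfl | hz0'
    · have h1 : qfun lam ε 0 y = qfun lam ε 0 (-y) := by
        unfold qfun logpen; rw [abs_neg]; ring_nf
      rw [h1]
      exact hmono (mem_Ici.2 le_rfl) (mem_Ici.2 (by linarith)) (by linarith)
    · calc qfun lam ε z 0 < qfun lam ε z (-y) :=
            hmono (mem_Ici.2 le_rfl) (mem_Ici.2 (by linarith)) (by linarith)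
        _ < qfun lam ε z y := key_neg hε hlam hz0' hy
  · exact hmono (mem_Ici.2 le_rfl) (mem_Ici.2 hy.le) hy

end keys

section mono
variable {lam ε : ℝ} (hε : 0 < ε) (hlam : 0 < lam) (h : ε < Real.sqrt lam)
include hε hlam h

lemma rfun_strictAnti {z z' : ℝ} (hz : 2 * Real.sqrt lam - ε ≤ z) (hzz : z < z') :
    rfun lam ε z' < rfun lam ε z := by
  have hz' : 2 * Real.sqrt lam - ε ≤ z' := le_of_lt (lt_of_le_of_lt hz hzz)
  set x := r2 lam ε z with hx
  have hxpos : 0 < x := r2_pos hε hlam h hz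
  have hxge : Real.sqrt lam - ε ≤ x := r2_ge hε hlam h hz
  have hr1' : r1 lam ε z' ≤ Real.sqrt lam - ε := r1_le hε hlam h hz'
  have hmax : max (r1 lam ε z') 0 ≤ x := max_le (le_trans hr1' hxge) hxpos.le
  have h1 : qfun lam ε z' (r2 lam ε z') ≤ qfun lam ε z' x := (key2 hε hlam h hz' hmax).1
  have h2 : qfun lam ε z' x - qfun lam ε z' 0 =
      (qfun lam ε z x - qfun lam ε z 0) - x * (z' - z) / lam := by
    unfold qfun logpen
    field_simp
    ring
  have h3 : 0 < x * (z' - z) / lam := div_pos (by nlinarith) hlam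
  unfold rfun
  rw [← hx]
  linarith

end mono

section master
variable {lam ε zs : ℝ} (hε : 0 < ε) (hlam : 0 < lam) (h : ε < Real.sqrt lam)
  (hzs1 : 2 * Real.sqrt lam - ε < zs) (hroot : rfun lam ε zs = 0)
include hε hlam h hzs1 hroot

lemma prox_pos_lt {w : ℝ} (hw : 0 ≤ w) (hwzs : w < zs) : prox lam ε w = {0} := by
  have hmin : ∀ y : ℝ, y ≠ 0 → qfun lam ε w 0 < qfun lam ε w y := by
    rcases lt_or_ge w (2 * Real.sqrt lam - ε) with hsm | hz
    · exact fun y hy => key_small hε hlam hw hsm hy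
    · have hwpos : 0 < w := lt_of_lt_of_le (by linarith) hz
      have hrw : 0 < rfun lam ε w := by
        have := rfun_strictAnti hε hlam h hz hwzs
        linarith [hroot ▸ this]
      have hpos : ∀ y : ℝ, 0 < y → qfun lam ε w 0 < qfun lam ε w y := by
        intro y hy
        rcases le_or_gt y (max (r1 lam ε w) 0) with h1 | h1
        · exact key1 hε hlam h hz hy.le h1 (ne_of_gt hy)
        · have h2 := (key2 hε hlam h hz h1.le).1
          have : rfun lam ε w = qfun lam ε w (r2 lam ε w) - qfun lam ε w 0 := rfl
          linarith
      intro y hy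
      rcases lt_trichotomy y 0 with h1 | h1 | h1
      · calc qfun lam ε w 0 < qfun lam ε w (-y) := hpos (-y) (by linarith)
          _ < qfun lam ε w y := key_neg hε hlam hwpos h1
      · exact absurd h1 hy
      · exact hpos y h1
  ext x
  simp only [prox, Set.mem_setOf_eq, Set.mem_singleton_iff]
  constructor
  · intro hx
    by_contra hne
    exact absurd (hx 0) (not_le.2 (hmin x hne))
  · rintro rfl y
    rcases eq_or_ne y 0 with rfl | hy
    · exact le_rfl
    · exact (hmin y hy).le

lemma prox_pos_eq : prox lam ε zs = {0, r2 lam ε zs} := by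
  have hz : 2 * Real.sqrt lam - ε ≤ zs := hzs1.le
  have hzpos : 0 < zs := lt_of_lt_of_le (by linarith) hz
  have heq : qfun lam ε zs (r2 lam ε zs) = qfun lam ε zs 0 := by
    have : rfun lam ε zs = qfun lam ε zs (r2 lam ε zs) - qfun lam ε zs 0 := rfl
    linarith [hroot ▸ this]
  have hminle : ∀ y : ℝ, qfun lam ε zs 0 ≤ qfun lam ε zs y := by
    have hpos : ∀ y : ℝ, 0 ≤ y → qfun lam ε zs 0 ≤ qfun lam ε zs y := by
      intro y hy
      rcases le_or_gt y (max (r1 lam ε zs) 0) with h1 | h1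
      · rcases eq_or_ne y 0 with rfl | hy0
        · exact le_rfl
        · exact (key1 hε hlam h hz hy h1 hy0).le
      · have h2 := (key2 hε hlam h hz h1.le).1
        linarith
    intro y
    rcases lt_or_ge y 0 with h1 | h1
    · calc qfun lam ε zs 0 ≤ qfun lam ε zs (-y) := hpos (-y) (by linarith)
        _ ≤ qfun lam ε zs y := (key_neg hε hlam hzpos h1).le
    · exact hpos y h1
  ext x
  simp only [prox, Set.mem_setOf_eq, Set.mem_insert_iff, Set.mem_singleton_iff]
  constructor
  · intro hx
    have hx0 : 0 ≤ x := by
      by_contra hneg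
      push_neg at hneg
      exact absurd (hx (-x)) (not_le.2 (key_neg hε hlam hzpos hneg))
    rcases le_or_gt x (max (r1 lam ε zs) 0) with h1 | h1
    · left
      by_contra hne
      exact absurd (hx 0) (not_le.2 (key1 hε hlam h hz hx0 h1 hne))
    · right
      by_contra hne
      have := (key2 hε hlam h hz h1.le).2 hne
      have h3 := hx (r2 lam ε zs)
      linarith
  · rintro (rfl | rfl)
    · exact hminle
    · intro y; rw [heq]; exact hminle y

lemma prox_pos_gt {w : ℝ} (hwzs : zs < w) : prox lam ε w = {r2 lam ε w} := by
  have hz : 2 * Real.sqrt lam - ε ≤ w := by linarith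
  have hwpos : 0 < w := lt_of_lt_of_le (by linarith) hz
  have hrw : rfun lam ε w < 0 := by
    have := rfun_strictAnti hε hlam h hzs1.le hwzs
    linarith [hroot ▸ this]
  have hlt : qfun lam ε w (r2 lam ε w) < qfun lam ε w 0 := by
    have : rfun lam ε w = qfun lam ε w (r2 lam ε w) - qfun lam ε w 0 := rfl
    linarith
  have hmin : ∀ y : ℝ, y ≠ r2 lam ε w → qfun lam ε w (r2 lam ε w) < qfun lam ε w y := by
    have hpos : ∀ y : ℝ, 0 ≤ y → y ≠ r2 lam ε w →
        qfun lam ε w (r2 lam ε w) < qfun lam ε w y := by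
      intro y hy hne
      rcases le_or_gt y (max (r1 lam ε w) 0) with h1 | h1
      · rcases eq_or_ne y 0 with rfl | hy0
        · exact hlt
        · have := key1 hε hlam h hz hy h1 hy0
          linarith
      · exact (key2 hε hlam h hz h1.le).2 hne
    intro y hy
    rcases lt_or_ge y 0 with h1 | h1
    · have h2 : qfun lam ε w (r2 lam ε w) ≤ qfun lam ε w (-y) := by
        rcases eq_or_ne (-y) (r2 lam ε w) with he | hne
        · rw [he]
        · exact (hpos (-y) (by linarith) hne).le
      calc qfun lam ε w (r2 lam ε w) ≤ qfun lam ε w (-y) := h2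
        _ < qfun lam ε w y := key_neg hε hlam hwpos h1
    · exact hpos y h1 hy
  ext x
  simp only [prox, Set.mem_setOf_eq, Set.mem_singleton_iff]
  constructor
  · intro hx
    by_contra hne
    exact absurd (hx (r2 lam ε w)) (not_le.2 (hmin x hne))
  · rintro rfl y
    rcases eq_or_ne y (r2 lam ε w) with rfl | hy
    · exact le_rfl
    · exact (hmin y hy).le

end master

lemma qfun_neg (lam ε z t : ℝ) : qfun lam ε z t = qfun lam ε (-z) (-t) := by
  unfold qfun logpen; rw [abs_neg]; ring_nf

lemma mem_prox_neg (lam ε z x : ℝ) : x ∈ prox lam ε z ↔ -x ∈ prox lam ε (-z) := by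
  simp only [prox, Set.mem_setOf_eq]
  constructor
  · intro hx y
    have := hx (-y)
    rwa [qfun_neg lam ε z x, qfun_neg lam ε z (-y), neg_neg] at this
  · intro hx y
    have := hx (-y)
    rwa [qfun_neg lam ε z x, qfun_neg lam ε z y]

end aux

/-- explicit form of `prox_{λg}` when `√λ > ε`. -/
theorem prox_formula_sqrt_gt (ε lam zs : ℝ) (hε : 0 < ε) (hlam : 0 < lam)
    (h : ε < Real.sqrt lam)
    (hzs : zs ∈ Set.Ioo (2 * Real.sqrt lam - ε) (lam / ε))
    (hroot : rfun lam ε zs = 0) (z : ℝ) :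
    (|z| < zs → prox lam ε z = {0}) ∧
    (|z| = zs → prox lam ε z = {0, Real.sign z * r2 lam ε zs}) ∧
    (zs < |z| → prox lam ε z = {Real.sign z * r2 lam ε |z|}) := by
  obtain ⟨hzs1, hzs2⟩ := hzs
  have hzspos : 0 < zs := by
    have hsl : ε < Real.sqrt lam := h
    linarith
  refine ⟨?_, ?_, ?_⟩
  · intro hlt
    rcases le_or_gt 0 z with hz0 | hz0
    · rw [abs_of_nonneg hz0] at hlt
      exact prox_pos_lt hε hlam h hzs1 hroot hz0 hlt
    · rw [abs_of_neg hz0] at hlt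
      have hp := prox_pos_lt hε hlam h hzs1 hroot (by linarith) hlt
      ext x
      rw [mem_prox_neg lam ε z x, hp]
      simp
  · intro heq
    rcases lt_trichotomy z 0 with hz0 | hz0 | hz0
    · rw [abs_of_neg hz0] at heq
      have hp := prox_pos_eq hε hlam h hzs1 hroot
      ext x
      rw [mem_prox_neg lam ε z x, heq, hp, Real.sign_of_neg hz0]
      simp only [Set.mem_insert_iff, Set.mem_singleton_iff, neg_eq_zero]
      constructor
      · rintro (rfl | hx)
        · exact Or.inl rfl
        · right; linarith
      · rintro (rfl | hx)
        · exact Or.inl rfl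
        · right; linarith
    · exfalso; rw [hz0, abs_zero] at heq; linarith
    · rw [abs_of_pos hz0] at heq
      rw [Real.sign_of_pos hz0, one_mul, heq]
      exact prox_pos_eq hε hlam h hzs1 hroot
  · intro hgt
    rcases lt_trichotomy z 0 with hz0 | hz0 | hz0
    · rw [abs_of_neg hz0] at hgt ⊢
      have hp := prox_pos_gt hε hlam h hzs1 hroot hgt
      ext x
      rw [mem_prox_neg lam ε z x, hp, Real.sign_of_neg hz0]
      simp only [Set.mem_singleton_iff]
      constructor
      · intro hx; linarith
      · intro hx; linarith
    · exfalso; rw [hz0, abs_zero] at hgt; linarith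
    · rw [abs_of_pos hz0] at hgt ⊢
      rw [Real.sign_of_pos hz0, one_mul]
      exact prox_pos_gt hε hlam h hzs1 hroot hgt
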